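/- Let b ∈ (0,3], T > 0, and let u be a classical solution of the b-equation on [0,T)×ℝ. Assume that either u(t,x) ≥ 0 for all (t,x) ∈ [0,T)×ℝ or u(t,x) ≤ 0 for all (t,x) ∈ [0,T)×ℝ, and that the quantity H(t) = ∫_ℝ u(t,x) dx is finite and independent of t ∈ [0,T). If u vanishes identically on a nonempty open subset of (0,T)×ℝ, then u(t,x) = 0 for all (t,x) ∈ [0,T)×ℝ. -/

import Mathlib

open MeasureTheory Set

/-- The inverse Helmholtz operator `Λ⁻² = (1 - ∂ₓ²)⁻¹` on the line, given by
convolution with the kernel `e^{-|x|}/2`. -/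
noncomputable def lam2 (w : ℝ → ℝ) (x : ℝ) : ℝ :=
  (1/2) * ∫ y : ℝ, Real.exp (-|x - y|) * w y

/-- A classical solution of the `b`-equation
`uₜ + u uₓ = -∂ₓΛ⁻²((b/2)u² + ((3-b)/2)uₓ²)` on `[0,T) × ℝ`: for each `t ∈ [0,T)`,
`u(t,·)` is continuously differentiable with `u(t,·)` and `∂ₓu(t,·)` continuous,
bounded and integrable; `∂ₜu` exists on `(0,T) × ℝ`; and the equation holds
pointwise on `(0,T) × ℝ`. -/
def IsBEquationSolution (b T : ℝ) (u : ℝ → ℝ → ℝ) : Prop :=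
  (∀ t ∈ Set.Ico (0:ℝ) T,
    ContDiff ℝ 1 (u t) ∧
    (∃ C : ℝ, ∀ x, |u t x| ≤ C) ∧ Integrable (u t) ∧
    (∃ C : ℝ, ∀ x, |deriv (u t) x| ≤ C) ∧ Integrable (deriv (u t))) ∧
  (∀ t ∈ Set.Ioo (0:ℝ) T, ∀ x : ℝ, DifferentiableAt ℝ (fun s => u s x) t) ∧
  (∀ t ∈ Set.Ioo (0:ℝ) T, ∀ x : ℝ,
    deriv (fun s => u s x) t + u t x * deriv (u t) x =
      -(deriv (lam2 (fun y => (b/2) * (u t y)^2 + ((3-b)/2) * (deriv (u t) y)^2)) x))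

/-- `y ↦ e^y F y` is integrable on `Iic a` for `F` integrable. -/
lemma intOn_exp_Iic {F : ℝ → ℝ} (hFc : Continuous F) (hFi : Integrable F) (a : ℝ) :
    IntegrableOn (fun y => Real.exp y * F y) (Set.Iic a) := by
  apply Integrable.mono' ((hFi.restrict (s := Set.Iic a)).abs.const_mul (Real.exp a))
  · exact (Real.continuous_exp.mul hFc).aestronglyMeasurable
  · refine (ae_restrict_iff' measurableSet_Iic).mpr (Filter.Eventually.of_forall fun y hy => ?_)
    rw [Real.norm_eq_abs, abs_mul, abs_of_pos (Real.exp_pos y)]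
    exact mul_le_mul_of_nonneg_right (Real.exp_le_exp.mpr hy) (abs_nonneg _)

/-- `y ↦ e^{-y} F y` is integrable on `Ioi a` for `F` integrable. -/
lemma intOn_exp_Ioi {F : ℝ → ℝ} (hFc : Continuous F) (hFi : Integrable F) (a : ℝ) :
    IntegrableOn (fun y => Real.exp (-y) * F y) (Set.Ioi a) := by
  apply Integrable.mono' ((hFi.restrict (s := Set.Ioi a)).abs.const_mul (Real.exp (-a)))
  · exact ((Real.continuous_exp.comp continuous_neg).mul hFc).aestronglyMeasurable
  · refine (ae_restrict_iff' measurableSet_Ioi).mpr (Filter.Eventually.of_forall fun y hy => ?_)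
    rw [Real.norm_eq_abs, abs_mul, abs_of_pos (Real.exp_pos _)]
    exact mul_le_mul_of_nonneg_right (Real.exp_le_exp.mpr (by linarith [mem_Ioi.mp hy]))
      (abs_nonneg _)

/-- Difference of tail integrals over `Ioi`. -/
lemma integral_Ioi_sub_Ioi {g : ℝ → ℝ} (hg : ∀ a, IntegrableOn g (Set.Ioi a))
    {a b : ℝ} (hab : a ≤ b) :
    (∫ y in Set.Ioi a, g y) = (∫ y in Set.Ioc a b, g y) + ∫ y in Set.Ioi b, g y := by
  rw [← setIntegral_union (Set.Ioc_disjoint_Ioi le_rfl) measurableSet_Ioi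
      ((hg a).mono_set Set.Ioc_subset_Ioi_self) (hg b), Set.Ioc_union_Ioi_eq_Ioi hab]

/-- Splitting of `lam2` at `x` into the two exponential tails. -/
lemma lam2_eq {F : ℝ → ℝ} (hFc : Continuous F) (hFi : Integrable F) (x : ℝ) :
    lam2 F x = (1/2) * (Real.exp (-x) * (∫ y in Set.Iic x, Real.exp y * F y)
      + Real.exp x * ∫ y in Set.Ioi x, Real.exp (-y) * F y) := by
  have hker : Integrable (fun y => Real.exp (-|x - y|) * F y) := by
    refine hFi.bdd_mul ((Real.continuous_exp.comp
      (continuous_const.sub continuous_id).abs.neg).aestronglyMeasurable) (c := 1)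
      (Filter.Eventually.of_forall fun y => ?_)
    rw [Real.norm_eq_abs, abs_of_pos (Real.exp_pos _)]
    exact Real.exp_le_one_iff.mpr (neg_nonpos.mpr (abs_nonneg _))
  have h1 : (∫ y in Set.Iic x, Real.exp (-|x - y|) * F y)
      = Real.exp (-x) * ∫ y in Set.Iic x, Real.exp y * F y := by
    rw [← integral_const_mul]
    refine setIntegral_congr_fun measurableSet_Iic fun y hy => ?_
    rw [abs_of_nonneg (sub_nonneg.mpr (mem_Iic.mp hy)), ← mul_assoc, ← Real.exp_add]
    ring_nf
  have h2 : (∫ y in Set.Ioi x, Real.exp (-|x - y|) * F y)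
      = Real.exp x * ∫ y in Set.Ioi x, Real.exp (-y) * F y := by
    rw [← integral_const_mul]
    refine setIntegral_congr_fun measurableSet_Ioi fun y hy => ?_
    rw [abs_of_nonpos (sub_nonpos.mpr (mem_Ioi.mp hy).le), ← mul_assoc, ← Real.exp_add]
    ring_nf
  have hsplit := intervalIntegral.integral_Iic_add_Ioi (μ := volume) (b := x)
    (hker.integrableOn (s := Set.Iic x)) (hker.integrableOn (s := Set.Ioi x))
  rw [lam2, ← hsplit, h1, h2]

/-- The derivative of `lam2 F`. -/
lemma lam2_hasDerivAt {F : ℝ → ℝ} (hFc : Continuous F) (hFi : Integrable F) (x : ℝ) :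
    HasDerivAt (lam2 F)
      ((1/2) * (Real.exp x * (∫ y in Set.Ioi x, Real.exp (-y) * F y)
        - Real.exp (-x) * ∫ y in Set.Iic x, Real.exp y * F y)) x := by
  set g1 : ℝ → ℝ := fun y => Real.exp y * F y with hg1
  set g2 : ℝ → ℝ := fun y => Real.exp (-y) * F y with hg2
  have hg1c : Continuous g1 := Real.continuous_exp.mul hFc
  have hg2c : Continuous g2 := (Real.continuous_exp.comp continuous_neg).mul hFc
  set P : ℝ → ℝ := fun z => ∫ y in Set.Iic z, g1 y with hP
  set Q : ℝ → ℝ := fun z => ∫ y in Set.Ioi z, g2 y with hQ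
  have hPd : HasDerivAt P (g1 x) x := by
    have hrep : P = fun z => P 0 + ∫ t in (0:ℝ)..z, g1 t := by
      funext z
      have := intervalIntegral.integral_Iic_sub_Iic (intOn_exp_Iic hFc hFi 0)
        (intOn_exp_Iic hFc hFi z)
      simp only [hP]
      linarith [this]
    rw [hrep]
    exact ((hg1c.integral_hasStrictDerivAt 0 x).hasDerivAt).const_add (P 0)
  have hQd : HasDerivAt Q (-g2 x) x := by
    have hIoi : ∀ a, IntegrableOn g2 (Set.Ioi a) := intOn_exp_Ioi hFc hFi
    have hrep : Q = fun z => Q 0 - ∫ t in (0:ℝ)..z, g2 t := by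
      funext z
      rcases le_total 0 z with h0z | hz0
      · have := integral_Ioi_sub_Ioi hIoi h0z
        rw [intervalIntegral.integral_of_le h0z]
        simp only [hQ]
        linarith [this]
      · have := integral_Ioi_sub_Ioi hIoi hz0
        rw [intervalIntegral.integral_symm, intervalIntegral.integral_of_le hz0]
        simp only [hQ]
        linarith [this]
    rw [hrep]
    exact ((hg2c.integral_hasStrictDerivAt 0 x).hasDerivAt).const_sub (Q 0)
  have e1 : HasDerivAt (fun z : ℝ => Real.exp (-z)) (-Real.exp (-x)) x := by
    exact ((Real.hasDerivAt_exp (-x)).comp x (hasDerivAt_neg x)).congr_deriv (by ring)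
  have e2 : HasDerivAt Real.exp (Real.exp x) x := Real.hasDerivAt_exp x
  have h := ((e1.mul hPd).add (e2.mul hQd)).const_mul (1/2 : ℝ)
  have hfun : lam2 F = fun z => (1/2) * (Real.exp (-z) * P z + Real.exp z * Q z) := by
    funext z; exact lam2_eq hFc hFi z
  rw [hfun]
  convert h using 1
  · rfl
  · rfl
  · rfl
  have hx : Real.exp (-x) * (Real.exp x * F x) = F x := by
    rw [← mul_assoc, ← Real.exp_add]; simp
  have hx' : Real.exp x * (Real.exp (-x) * F x) = F x := by
    rw [← mul_assoc, ← Real.exp_add]; simp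
  simp only [g1, g2, P, Q]
  rw [mul_neg, hx', hx]
  ring

/-- **Unique continuation for the `b`-equation via the conserved quantity
`H(t) = ∫ u dx` (section 3.1).** A signed classical solution of the `b`-equation,
`b ∈ (0,3]`, with conserved `∫_ℝ u(t,x) dx`, vanishing on a nonempty open subset of
`(0,T) × ℝ`, vanishes identically. -/
theorem bEquation_unique_continuation_conserved (b T : ℝ)
    (hb : b ∈ Set.Ioc (0:ℝ) 3) (hT : 0 < T)
    (u : ℝ → ℝ → ℝ) (hu : IsBEquationSolution b T u)
    (hsign : (∀ t ∈ Set.Ico (0:ℝ) T, ∀ x : ℝ, 0 ≤ u t x) ∨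
             (∀ t ∈ Set.Ico (0:ℝ) T, ∀ x : ℝ, u t x ≤ 0))
    (hcons : ∃ c : ℝ, ∀ t ∈ Set.Ico (0:ℝ) T, (∫ x : ℝ, u t x) = c)
    (Ω : Set (ℝ × ℝ)) (hΩopen : IsOpen Ω) (hΩne : Ω.Nonempty)
    (hΩsub : Ω ⊆ Set.Ioo (0:ℝ) T ×ˢ Set.univ)
    (hvan : ∀ p ∈ Ω, u p.1 p.2 = 0) :
    ∀ t ∈ Set.Ico (0:ℝ) T, ∀ x : ℝ, u t x = 0 := by
  obtain ⟨⟨t₀, x₀⟩, hpΩ⟩ := hΩne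
  obtain ⟨ε, hε, hball⟩ := Metric.isOpen_iff.mp hΩopen _ hpΩ
  have ht₀ : t₀ ∈ Set.Ioo (0:ℝ) T := (hΩsub hpΩ).1
  have hzero : ∀ s y : ℝ, |s - t₀| < ε → |y - x₀| < ε → u s y = 0 := by
    intro s y hs hy
    refine hvan (s, y) (hball ?_)
    rw [Metric.mem_ball, Prod.dist_eq]
    exact max_lt (by rwa [Real.dist_eq]) (by rwa [Real.dist_eq])
  obtain ⟨hreg, hdifft, heq⟩ := hu
  obtain ⟨hC1, ⟨Cu, hCu⟩, hInt, ⟨Cv, hCv⟩, hIntv⟩ := hreg t₀ ⟨ht₀.1.le, ht₀.2⟩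
  have hucont : Continuous (u t₀) := hC1.continuous
  have hvcont : Continuous (deriv (u t₀)) := hC1.continuous_deriv le_rfl
  set F : ℝ → ℝ := fun y => (b/2) * (u t₀ y)^2 + ((3-b)/2) * (deriv (u t₀) y)^2 with hF
  have hFc : Continuous F :=
    (continuous_const.mul (hucont.pow 2)).add (continuous_const.mul (hvcont.pow 2))
  have hFi : Integrable F := by
    refine Integrable.add ?_ ?_
    · have h1 : Integrable (fun y => u t₀ y * u t₀ y) :=
        hInt.bdd_mul hucont.aestronglyMeasurable
          (c := Cu) (Filter.Eventually.of_forall fun y => by simpa [Real.norm_eq_abs] using hCu y)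
      simpa [pow_two] using h1.const_mul (b/2)
    · have h1 : Integrable (fun y => deriv (u t₀) y * deriv (u t₀) y) :=
        hIntv.bdd_mul hvcont.aestronglyMeasurable
          (c := Cv) (Filter.Eventually.of_forall fun y => by simpa [Real.norm_eq_abs] using hCv y)
      simpa [pow_two] using h1.const_mul ((3-b)/2)
  have hF0 : ∀ y, 0 ≤ F y := fun y =>
    add_nonneg (mul_nonneg (by linarith [hb.1]) (sq_nonneg _))
      (mul_nonneg (by linarith [hb.2]) (sq_nonneg _))
  -- F vanishes on the spatial ball
  have hFball : ∀ y : ℝ, |y - x₀| < ε → F y = 0 := by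
    intro y hy
    have hu0 : u t₀ y = 0 := hzero t₀ y (by simpa using hε) hy
    have hv0 : deriv (u t₀) y = 0 := by
      have hy' : Metric.ball x₀ ε ∈ nhds y :=
        Metric.isOpen_ball.mem_nhds (by simpa [Metric.mem_ball, Real.dist_eq] using hy)
      have hev : u t₀ =ᶠ[nhds y] fun _ => (0:ℝ) := by
        filter_upwards [hy'] with z hz
        exact hzero t₀ z (by simpa using hε)
          (by simpa [Metric.mem_ball, Real.dist_eq] using hz)
      have := hev.deriv_eq
      simpa using this
    simp [hF, hu0, hv0]
  set P : ℝ → ℝ := fun z => ∫ y in Set.Iic z, Real.exp y * F y with hPdef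
  set Q : ℝ → ℝ := fun z => ∫ y in Set.Ioi z, Real.exp (-y) * F y with hQdef
  -- the equation gives deriv (lam2 F) = 0 on the ball
  have hD : ∀ y : ℝ, |y - x₀| < ε → Real.exp y * Q y = Real.exp (-y) * P y := by
    intro y hy
    have hu0 : u t₀ y = 0 := hzero t₀ y (by simpa using hε) hy
    have hdt : deriv (fun s => u s y) t₀ = 0 := by
      have ht' : Metric.ball t₀ ε ∈ nhds t₀ := Metric.isOpen_ball.mem_nhds (by simpa using hε)
      have hev : (fun s => u s y) =ᶠ[nhds t₀] fun _ => (0:ℝ) := by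
        filter_upwards [ht'] with s hs
        exact hzero s y (by simpa [Real.dist_eq] using hs) hy
      have := hev.deriv_eq
      simpa using this
    have heqy := heq t₀ ht₀ y
    rw [hdt, hu0] at heqy
    have hder := (lam2_hasDerivAt hFc hFi y).deriv
    have : deriv (lam2 F) y = 0 := by linarith [heqy]
    rw [hder] at this
    have h2 : Real.exp y * Q y - Real.exp (-y) * P y = 0 := by
      simp only [hPdef, hQdef]
      linarith [this]
    linarith [h2]
  set x₂ : ℝ := x₀ + ε/2 with hx₂
  have hx₀mem : |x₀ - x₀| < ε := by simpa using hε
  have hx₂mem : |x₂ - x₀| < ε := by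
    rw [hx₂, show x₀ + ε/2 - x₀ = ε/2 by ring, abs_of_pos (by linarith)]
    linarith
  have hx₁₂ : x₀ < x₂ := by rw [hx₂]; linarith
  -- P and Q are constant on the interval
  have hIocSub : ∀ y ∈ Set.Ioc x₀ x₂, F y = 0 := by
    intro y hy
    refine hFball y ?_
    rw [abs_of_pos (by linarith [hy.1])]
    have := hy.2
    rw [hx₂] at this
    linarith
  have hQc : Q x₀ = Q x₂ := by
    have := integral_Ioi_sub_Ioi (intOn_exp_Ioi hFc hFi) hx₁₂.le
    have hz : (∫ y in Set.Ioc x₀ x₂, Real.exp (-y) * F y) = 0 :=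
      setIntegral_eq_zero_of_forall_eq_zero fun y hy => by rw [hIocSub y hy, mul_zero]
    simp only [hQdef]
    rw [this, hz, zero_add]
  have hPc : P x₂ = P x₀ := by
    have h1 := intervalIntegral.integral_Iic_sub_Iic (intOn_exp_Iic hFc hFi x₀)
      (intOn_exp_Iic hFc hFi x₂)
    rw [intervalIntegral.integral_of_le hx₁₂.le] at h1
    have hz : (∫ y in Set.Ioc x₀ x₂, Real.exp y * F y) = 0 :=
      setIntegral_eq_zero_of_forall_eq_zero fun y hy => by rw [hIocSub y hy, mul_zero]
    rw [hz] at h1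
    simp only [hPdef]
    linarith [h1]
  have hq0 : 0 ≤ Q x₀ :=
    setIntegral_nonneg measurableSet_Ioi fun y _ => mul_nonneg (Real.exp_pos _).le (hF0 y)
  -- the two relations force P = Q = 0
  have hA := hD x₀ hx₀mem
  have hB := hD x₂ hx₂mem
  rw [hQc.symm, hPc] at hB
  have hA' : Real.exp (2*x₀) * Q x₀ = P x₀ := by
    have h := congrArg (fun z => Real.exp x₀ * z) hA
    rw [← mul_assoc, ← mul_assoc, ← Real.exp_add, ← Real.exp_add] at h
    simpa [two_mul] using h
  have hB' : Real.exp (2*x₂) * Q x₀ = P x₀ := by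
    have h := congrArg (fun z => Real.exp x₂ * z) hB
    rw [← mul_assoc, ← mul_assoc, ← Real.exp_add, ← Real.exp_add] at h
    simpa [two_mul] using h
  have hq : Q x₀ = 0 := by
    by_contra hq
    have : Real.exp (2*x₀) = Real.exp (2*x₂) :=
      mul_right_cancel₀ hq (hA'.trans hB'.symm)
    have := Real.exp_injective this
    linarith
  have hp : P x₀ = 0 := by rw [← hA', hq, mul_zero]
  -- F vanishes identically
  have hae1 : ∀ᵐ y ∂(volume.restrict (Set.Iic x₀)), F y = 0 := by
    have h := (integral_eq_zero_iff_of_nonneg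
      (fun y => mul_nonneg (Real.exp_pos y).le (hF0 y)) (intOn_exp_Iic hFc hFi x₀)).mp hp
    filter_upwards [h] with y hy
    exact (mul_eq_zero.mp hy).resolve_left (Real.exp_ne_zero y)
  have hae2 : ∀ᵐ y ∂(volume.restrict (Set.Ioi x₀)), F y = 0 := by
    have h := (integral_eq_zero_iff_of_nonneg
      (fun y => mul_nonneg (Real.exp_pos _).le (hF0 y)) (intOn_exp_Ioi hFc hFi x₀)).mp hq
    filter_upwards [h] with y hy
    exact (mul_eq_zero.mp hy).resolve_left (Real.exp_ne_zero _)
  have hFae : F =ᵐ[volume] fun _ => (0:ℝ) := by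
    have hsplit : (volume : Measure ℝ)
        = volume.restrict (Set.Iic x₀) + volume.restrict (Set.Ioi x₀) := by
      rw [← Measure.restrict_union (Set.Iic_disjoint_Ioi le_rfl) measurableSet_Ioi,
        Set.Iic_union_Ioi, Measure.restrict_univ]
    rw [Filter.EventuallyEq, hsplit, ae_add_measure_iff]
    exact ⟨hae1, hae2⟩
  have hFzero : ∀ y, F y = 0 := by
    have h := (hFc.ae_eq_iff_eq volume continuous_const).mp hFae
    exact fun y => congrFun h y
  have hu0 : ∀ y, u t₀ y = 0 := by
    intro y
    have h := hFzero y
    simp only [hF] at h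
    have h2 : (u t₀ y)^2 = 0 := by
      nlinarith [sq_nonneg (u t₀ y), sq_nonneg (deriv (u t₀) y), hb.1, hb.2]
    exact pow_eq_zero_iff two_ne_zero |>.mp h2
  -- conserved quantity is zero
  obtain ⟨c, hc⟩ := hcons
  have hc0 : c = 0 := by
    have h := hc t₀ ⟨ht₀.1.le, ht₀.2⟩
    simp only [hu0, integral_zero] at h
    exact h.symm
  -- conclude
  intro t ht x
  obtain ⟨hC1t, _, hIntt, _, _⟩ := hreg t ht
  have hcontt : Continuous (u t) := hC1t.continuous
  have hint0 : (∫ x : ℝ, u t x) = 0 := (hc t ht).trans hc0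
  rcases hsign with hs | hs
  · have h := (integral_eq_zero_iff_of_nonneg (fun y => hs t ht y) hIntt).mp hint0
    have := (hcontt.ae_eq_iff_eq volume continuous_const).mp h
    exact congrFun this x
  · have hneg : (∫ x : ℝ, -(u t x)) = 0 := by rw [integral_neg, hint0, neg_zero]
    have h := (integral_eq_zero_iff_of_nonneg
      (fun y => neg_nonneg.mpr (hs t ht y)) hIntt.neg).mp hneg
    have := (hcontt.neg.ae_eq_iff_eq volume continuous_const).mp h
    have hx := congrFun this x
    have hx' : -u t x = 0 := hx
    linarith [hx']
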